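/- Let G, N be simply connected nilpotent Lie groups and Λ ⊆ G a relatively dense subset with K·Λ = G for some compact K. If f, g : G → N are continuous homomorphisms such that λ ↦ f(λ)g(λ)⁻¹ is bounded on Λ, then the map x ↦ f(x)g(x)⁻¹ is bounded on all of G. -/

import Mathlib

open scoped Pointwise
open Topology

/-- A simply connected nilpotent (finite-dimensional real) Lie group, bundled. -/
structure SCNilpotentLieGroup : Type 1 where
  /-- the model vector space -/
  E : Type
  /-- the underlying set of the group -/
  carrier : Type
  [nacg : NormedAddCommGroup E]
  [ns : NormedSpace ℝ E]
  [fd : FiniteDimensional ℝ E]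
  [ts : TopologicalSpace carrier]
  [cs : ChartedSpace E carrier]
  [grp : Group carrier]
  [lie : LieGroup (modelWithCornersSelf ℝ E) (⊤ : ℕ∞) carrier]
  [sc : SimplyConnectedSpace carrier]
  [nil : Group.IsNilpotent carrier]

attribute [instance] SCNilpotentLieGroup.nacg SCNilpotentLieGroup.ns SCNilpotentLieGroup.fd
  SCNilpotentLieGroup.ts SCNilpotentLieGroup.cs SCNilpotentLieGroup.grp
  SCNilpotentLieGroup.lie SCNilpotentLieGroup.sc SCNilpotentLieGroup.nil

/-- Let `G, N` be simply connected nilpotent Lie groups and `Λ ⊆ G`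
relatively dense (`K·Λ = G` for some compact `K`). If `f, g : G → N` are continuous
homomorphisms with `λ ↦ f(λ)g(λ)⁻¹` bounded on `Λ`, then `x ↦ f(x)g(x)⁻¹` is bounded on
all of `G`. -/
theorem boundedDistance_of_boundedDistance_on_relativelyDense
    (S T : SCNilpotentLieGroup) (Λ : Set S.carrier)
    (hΛ : ∃ K : Set S.carrier, IsCompact K ∧ K * Λ = Set.univ)
    (f g : S.carrier →* T.carrier) (hf : Continuous f) (hg : Continuous g)
    (hb : ∃ C : Set T.carrier, IsCompact C ∧ ∀ x ∈ Λ, f x * (g x)⁻¹ ∈ C) :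
    ∃ C : Set T.carrier, IsCompact C ∧ ∀ x : S.carrier, f x * (g x)⁻¹ ∈ C := by
  haveI : IsTopologicalGroup T.carrier := topologicalGroup_of_lieGroup (modelWithCornersSelf ℝ T.E) (⊤ : ℕ∞)
  obtain ⟨K, hK, hKΛ⟩ := hΛ
  obtain ⟨C, hC, hCb⟩ := hb
  refine ⟨(f '' K) * C * (g '' K)⁻¹,
    ((hK.image hf).mul hC).mul (hK.image hg).inv, fun x => ?_⟩
  have hx : x ∈ K * Λ := by rw [hKΛ]; trivial
  obtain ⟨k, hk, l, hl, rfl⟩ := hx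
  have : f (k * l) * (g (k * l))⁻¹ = f k * (f l * (g l)⁻¹) * (g k)⁻¹ := by
    simp [map_mul, mul_assoc]
  rw [this]
  exact Set.mul_mem_mul (Set.mul_mem_mul ⟨k, hk, rfl⟩ (hCb l hl))
    (Set.inv_mem_inv.mpr ⟨k, hk, rfl⟩)
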